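/- Let G be a finite abelian group of exponent n and let A ⊆ [1, n-1] be a nonempty subset such that A ∪ {0} is, as a subset of Z/nZ, a proper subgroup of Z/nZ. Write A ∪ {0} = ⟨d⟩ with d the minimal positive such generator, so A = dA' where A' ∪ {0} is isomorphic to Z/(n/d)Z. Then D_A(G) = D_{A'}(dG). -/
import Mathlib


open Finset

/-- `I` is an index set carrying an `A`-weighted zero sum of `g` (the empty set counts). -/
def IsWZSum {G ι : Type*} [Fintype ι] [AddCommGroup G] (A : Set ℤ) (g : ι → G)
    (I : Finset ι) : Prop :=
  ∃ a : ι → ℤ, (∀ i ∈ I, a i ∈ A) ∧ ∑ i ∈ I, a i • g i = 0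

/-- `N_{A,0}(S)`: the number of subsets of the index set carrying an `A`-weighted zero sum. -/
noncomputable def NZero {G ι : Type*} [Fintype ι] [AddCommGroup G] (A : Set ℤ) (g : ι → G) : ℕ :=
  Set.ncard {I : Finset ι | IsWZSum A g I}

/-- The subsequence of `g` indexed by `J` is `A`-weighted zero-sum free. -/
def IsZSFree {G ι : Type*} [Fintype ι] [AddCommGroup G] (A : Set ℤ) (g : ι → G)
    (J : Finset ι) : Prop :=
  ∀ I ⊆ J, I.Nonempty → ¬ IsWZSum A g I

/-- The `A`-weighted Davenport constant of `G`. -/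
noncomputable def DavenportW (A : Set ℤ) (G : Type*) [AddCommGroup G] : ℕ :=
  sInf {l : ℕ | 0 < l ∧ ∀ g : Fin l → G, ∃ I : Finset (Fin l), I.Nonempty ∧ IsWZSum A g I}

theorem stmt1 (G : Type*) [AddCommGroup G] [Finite G] (n : ℕ)
    (hn : AddMonoid.exponent G = n)
    (A A' : Set ℤ) (hA : A.Nonempty) (hAsub : A ⊆ Set.Icc 1 ((n : ℤ) - 1))
    (d : ℕ) (hd : 0 < d)
    (hsub : (fun a : ℤ => (a : ZMod n)) '' A ∪ {0}
              = (AddSubgroup.zmultiples ((d : ZMod n)) : Set (ZMod n)))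
    (hproper : AddSubgroup.zmultiples ((d : ZMod n)) ≠ ⊤)
    (hmin : ∀ d' : ℕ, 0 < d' →
        (fun a : ℤ => (a : ZMod n)) '' A ∪ {0}
          = (AddSubgroup.zmultiples ((d' : ZMod n)) : Set (ZMod n)) → d ≤ d')
    (hA' : A = (fun a => (d : ℤ) * a) '' A') :
    DavenportW A G =
      DavenportW A'
        (AddMonoidHom.range
          (AddMonoidHom.mk' (fun x : G => (d : ℤ) • x)
            (fun x y => smul_add _ x y))) := by
  classical
  set H := AddMonoidHom.range
      (AddMonoidHom.mk' (fun x : G => (d : ℤ) • x) (fun x y => smul_add _ x y))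
  unfold DavenportW
  congr 1
  ext l
  simp only [Set.mem_setOf_eq]
  constructor
  · rintro ⟨hl, Hg⟩
    refine ⟨hl, fun h => ?_⟩
    have hsur : ∀ i, ∃ y : G, (d : ℤ) • y = ((h i : G)) := fun i => (h i).2
    choose g hg using hsur
    obtain ⟨I, hI, a, ha, hsum⟩ := Hg g
    have ha' : ∀ i ∈ I, ∃ b, b ∈ A' ∧ (d : ℤ) * b = a i := by
      intro i hi
      have := ha i hi
      rw [hA'] at this
      obtain ⟨b, hb, hb2⟩ := this
      exact ⟨b, hb, hb2⟩
    choose! b hb1 hb2 using ha'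
    refine ⟨I, hI, b, fun i hi => (hb1 i hi), ?_⟩
    rw [← ZeroMemClass.coe_eq_zero]
    push_cast
    calc ∑ i ∈ I, b i • ((h i : G))
        = ∑ i ∈ I, a i • g i := by
          refine Finset.sum_congr rfl fun i hi => ?_
          rw [← hg i, smul_comm, ← mul_smul, ← hb2 i hi]
      _ = 0 := hsum
  · rintro ⟨hl, Hg⟩
    refine ⟨hl, fun g => ?_⟩
    have hmem : ∀ i, (d : ℤ) • g i ∈ H := fun i => ⟨g i, rfl⟩
    obtain ⟨I, hI, b, hb, hsum⟩ := Hg fun i => (⟨(d : ℤ) • g i, hmem i⟩ : H)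
    refine ⟨I, hI, fun i => (d : ℤ) * b i, fun i hi => ?_, ?_⟩
    · rw [hA']; exact ⟨b i, hb i hi, rfl⟩
    · have := congrArg (Subtype.val) hsum
      push_cast at this
      calc ∑ i ∈ I, ((d : ℤ) * b i) • g i
          = ∑ i ∈ I, b i • ((d : ℤ) • g i) := by
            refine Finset.sum_congr rfl fun i hi => ?_
            rw [← mul_smul, mul_comm]
        _ = 0 := this
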